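/- Let τ be a para-complex structure compatible with B, and assume the support Σ_T is isotropic and T X ∘ τ + τ ∘ T X = 0 for all X ∈ V. If dim V < 12, then Σ_T is contained in one of the two eigenspaces of τ: either Σ_T ⊆ {x : τx = x} or Σ_T ⊆ {x : τx = −x}. -/

import Mathlib

private lemma sum12aux {M : Type*} [AddCommMonoid M] (f : Fin 12 → M) :
    ∑ i, f i = f 0 + f 1 + f 2 + f 3 + f 4 + f 5 + f 6 + f 7 + f 8 + f 9 + f 10 + f 11 := by
  repeat rw [Fin.sum_univ_castSucc]
  simp

/-- If `τ` is a para-complex structure compatible with `B`, the support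
`Σ_T` is isotropic, `T X ∘ τ + τ ∘ T X = 0` for all `X`, and `dim V < 12`, then
`Σ_T` is contained in one of the two eigenspaces of `τ`. -/
theorem support_in_eigenspace_of_small_dim
    {V : Type*} [AddCommGroup V] [Module ℝ V] [FiniteDimensional ℝ V]
    (B : V →ₗ[ℝ] V →ₗ[ℝ] ℝ)
    (hBsymm : ∀ x y : V, B x y = B y x)
    (hBnd : ∀ x : V, (∀ y : V, B x y = 0) → x = 0)
    (T : V →ₗ[ℝ] V →ₗ[ℝ] V)
    (halt₁ : ∀ X Y Z : V, B (T X Y) Z = - B (T Y X) Z)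
    (halt₂ : ∀ X Y Z : V, B (T X Y) Z = - B (T X Z) Y)
    (halt₃ : ∀ X Y Z : V, B (T X Y) Z = - B (T Z Y) X)
    (τ : V →ₗ[ℝ] V)
    (hτ2 : τ ∘ₗ τ = LinearMap.id)
    (hτB : ∀ x y : V, B (τ x) (τ y) = - B x y)
    (hiso : ∀ u ∈ Submodule.span ℝ {w : V | ∃ X Y : V, T X Y = w},
      ∀ v ∈ Submodule.span ℝ {w : V | ∃ X Y : V, T X Y = w}, B u v = 0)
    (hanti : ∀ X : V, (T X) ∘ₗ τ + τ ∘ₗ (T X) = 0)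
    (hdim : Module.finrank ℝ V < 12) :
    (∀ v ∈ Submodule.span ℝ {w : V | ∃ X Y : V, T X Y = w}, τ v = v) ∨
    (∀ v ∈ Submodule.span ℝ {w : V | ∃ X Y : V, T X Y = w}, τ v = -v) := by
  classical
  -- basic consequences
  have hττ : ∀ y : V, τ (τ y) = y := by
    intro y
    have := LinearMap.ext_iff.mp hτ2 y
    simpa using this
  have hτneg : ∀ x y : V, B (τ x) y = - B x (τ y) := by
    intro x y
    have := hτB x (τ y)
    rwa [hττ] at this
  have hTτ : ∀ X Y : V, T X (τ Y) = - τ (T X Y) := by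
    intro X Y
    have h := LinearMap.ext_iff.mp (hanti X) Y
    simp only [LinearMap.add_apply, LinearMap.comp_apply, LinearMap.zero_apply] at h
    exact eq_neg_of_add_eq_zero_left h
  have hEig : ∀ X Y : V, τ Y = Y → τ (T X Y) = -(T X Y) := by
    intro X Y h
    have h2 := hTτ X Y
    rw [h] at h2
    exact (neg_eq_iff_eq_neg.mpr h2).symm
  have hEig' : ∀ X Y : V, τ Y = -Y → τ (T X Y) = T X Y := by
    intro X Y h
    have h2 := hTτ X Y
    rw [h, map_neg] at h2
    exact (neg_injective h2).symm
  have hpp : ∀ a b : V, τ a = a → τ b = b → B a b = 0 := by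
    intro a b ha hb
    have := hτB a b
    rw [ha, hb] at this
    linarith
  have hmm2 : ∀ a b : V, τ a = -a → τ b = -b → B a b = 0 := by
    intro a b ha hb
    have := hτB a b
    rw [ha, hb] at this
    simp only [map_neg, LinearMap.neg_apply, neg_neg] at this
    linarith
  have hTT : ∀ a b e f : V, B (T a b) (T e f) = 0 := fun a b e f =>
    hiso _ (Submodule.subset_span ⟨a, b, rfl⟩) _ (Submodule.subset_span ⟨e, f, rfl⟩)
  have hd1 : ∀ a b : V, B (T a b) a = 0 := by
    intro a b; have := halt₃ a b a; linarith
  have hd2 : ∀ a b : V, B (T a b) b = 0 := by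
    intro a b; have := halt₂ a b b; linarith
  have hd1' : ∀ a b : V, B a (T a b) = 0 := fun a b => (hBsymm _ _).trans (hd1 a b)
  have hd2' : ∀ a b : V, B b (T a b) = 0 := fun a b => (hBsymm _ _).trans (hd2 a b)
  have hcyc : ∀ a b e : V, B (T a b) e = B (T b e) a := by
    intro a b e
    have h1 := halt₃ a b e
    have h2 := halt₁ e b a
    linarith
  have hMixed : ∀ X Y : V, τ X = X → τ Y = -Y → T X Y = 0 := by
    intro X Y hX hY
    apply hBnd
    intro Z
    have e1 : B (τ (T X Y)) Z = - B (T X Y) (τ Z) := hτneg _ _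
    rw [hEig' X Y hY] at e1
    have h1 := halt₃ X Y (τ Z)
    have h2 := halt₁ (τ Z) Y X
    have h3 : B (T Y (τ Z)) X = - B (τ (T Y Z)) X := by
      rw [hTτ]; simp
    have h4 : B (τ (T Y Z)) X = - B (T Y Z) (τ X) := hτneg _ _
    rw [hX] at h4
    have h5 := hcyc X Y Z
    linarith
  have hMixed' : ∀ X Y : V, τ X = -X → τ Y = Y → T X Y = 0 := by
    intro X Y hX hY
    apply hBnd
    intro Z
    have h1 := halt₁ X Y Z
    rw [hMixed Y X hY hX] at h1
    simpa using h1
  -- eigenprojections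
  have hPp : ∀ v : V, τ ((2⁻¹ : ℝ) • (v + τ v)) = (2⁻¹ : ℝ) • (v + τ v) := by
    intro v
    rw [map_smul, map_add, hττ, add_comm]
  have hPm : ∀ v : V, τ ((2⁻¹ : ℝ) • (v - τ v)) = -((2⁻¹ : ℝ) • (v - τ v)) := by
    intro v
    rw [map_smul, map_sub, hττ, ← smul_neg]
    congr 1
    abel
  have hsum : ∀ v : V, (2⁻¹ : ℝ) • (v + τ v) + (2⁻¹ : ℝ) • (v - τ v) = v := by
    intro v
    rw [← smul_add]
    have h : (v + τ v) + (v - τ v) = (2 : ℝ) • v := by rw [two_smul]; abel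
    rw [h, smul_smul]
    norm_num
  by_contra hcon
  push_neg at hcon
  obtain ⟨⟨v1, hv1, hv1'⟩, v2, hv2, hv2'⟩ := hcon
  -- produce a nonzero value of T on the (+)-eigenspace
  have key1 : ∃ a b : V, τ a = a ∧ τ b = b ∧ T a b ≠ 0 := by
    have h1 : ∃ X Y : V, τ (T X Y) ≠ T X Y := by
      by_contra hno
      push_neg at hno
      refine hv1' ?_
      refine Submodule.span_induction ?_ ?_ ?_ ?_ hv1
      · rintro w ⟨a, b, rfl⟩; exact hno a b
      · exact map_zero τ
      · intro a b _ _ ha hb; rw [map_add, ha, hb]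
      · intro r a _ ha; rw [map_smul, ha]
    obtain ⟨X0, Y0, hXY⟩ := h1
    refine ⟨(2⁻¹ : ℝ) • (X0 + τ X0), (2⁻¹ : ℝ) • (Y0 + τ Y0), hPp X0, hPp Y0, ?_⟩
    intro h0
    apply hXY
    have hT : T X0 Y0 = T ((2⁻¹ : ℝ) • (X0 + τ X0)) ((2⁻¹ : ℝ) • (Y0 + τ Y0))
        + T ((2⁻¹ : ℝ) • (X0 - τ X0)) ((2⁻¹ : ℝ) • (Y0 - τ Y0)) := by
      conv_lhs => rw [← hsum X0, ← hsum Y0]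
      simp only [map_add, LinearMap.add_apply,
        hMixed _ _ (hPp X0) (hPm Y0), hMixed' _ _ (hPm X0) (hPp Y0), add_zero, zero_add]
      try abel
    rw [hT, h0, zero_add, hEig' _ _ (hPm Y0)]
  -- produce a nonzero value of T on the (−)-eigenspace
  have key2 : ∃ a b : V, τ a = -a ∧ τ b = -b ∧ T a b ≠ 0 := by
    have h1 : ∃ X Y : V, τ (T X Y) ≠ -(T X Y) := by
      by_contra hno
      push_neg at hno
      refine hv2' ?_
      refine Submodule.span_induction ?_ ?_ ?_ ?_ hv2
      · rintro w ⟨a, b, rfl⟩; exact hno a b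
      · simp
      · intro a b _ _ ha hb; rw [map_add, ha, hb]; abel
      · intro r a _ ha; rw [map_smul, ha, smul_neg]
    obtain ⟨X0, Y0, hXY⟩ := h1
    refine ⟨(2⁻¹ : ℝ) • (X0 - τ X0), (2⁻¹ : ℝ) • (Y0 - τ Y0), hPm X0, hPm Y0, ?_⟩
    intro h0
    apply hXY
    have hT : T X0 Y0 = T ((2⁻¹ : ℝ) • (X0 + τ X0)) ((2⁻¹ : ℝ) • (Y0 + τ Y0))
        + T ((2⁻¹ : ℝ) • (X0 - τ X0)) ((2⁻¹ : ℝ) • (Y0 - τ Y0)) := by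
      conv_lhs => rw [← hsum X0, ← hsum Y0]
      simp only [map_add, LinearMap.add_apply,
        hMixed _ _ (hPp X0) (hPm Y0), hMixed' _ _ (hPm X0) (hPp Y0), add_zero, zero_add]
      try abel
    rw [hT, h0, add_zero, hEig _ _ (hPp Y0)]
  obtain ⟨x, y, px, py, hxy⟩ := key1
  obtain ⟨u, w, mu, mw, huw⟩ := key2
  -- find z in the (+)-eigenspace with B (T x y) z ≠ 0
  obtain ⟨z, pz, hc⟩ : ∃ z : V, τ z = z ∧ B (T x y) z ≠ 0 := by
    have h0 : ∃ Z0 : V, B (T x y) Z0 ≠ 0 := by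
      by_contra h
      push_neg at h
      exact hxy (hBnd _ h)
    obtain ⟨Z0, hZ0⟩ := h0
    refine ⟨(2⁻¹ : ℝ) • (Z0 + τ Z0), hPp Z0, ?_⟩
    intro h
    apply hZ0
    have hmpart : B (T x y) ((2⁻¹ : ℝ) • (Z0 - τ Z0)) = 0 :=
      hmm2 _ _ (hEig x y py) (hPm Z0)
    rw [← hsum Z0, map_add, h, hmpart, add_zero]
  -- find s in the (−)-eigenspace with B (T u w) s ≠ 0
  obtain ⟨s, ms, hd⟩ : ∃ s : V, τ s = -s ∧ B (T u w) s ≠ 0 := by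
    have h0 : ∃ S0 : V, B (T u w) S0 ≠ 0 := by
      by_contra h
      push_neg at h
      exact huw (hBnd _ h)
    obtain ⟨S0, hS0⟩ := h0
    refine ⟨(2⁻¹ : ℝ) • (S0 - τ S0), hPm S0, ?_⟩
    intro h
    apply hS0
    have hppart : B (T u w) ((2⁻¹ : ℝ) • (S0 + τ S0)) = 0 :=
      hpp _ _ (hEig' u w mw) (hPp S0)
    rw [← hsum S0, map_add, hppart, h, add_zero]
  -- eigenspace memberships of the T-values
  have mTxy : τ (T x y) = -(T x y) := hEig x y py
  have mTyz : τ (T y z) = -(T y z) := hEig y z pz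
  have mTzx : τ (T z x) = -(T z x) := hEig z x px
  have pTuw : τ (T u w) = T u w := hEig' u w mw
  have pTws : τ (T w s) = T w s := hEig' w s ms
  have pTsu : τ (T s u) = T s u := hEig' s u mu
  -- the twelve vectors
  set vv : Fin 12 → V := ![x, y, z, T u w, T w s, T s u, u, w, s, T x y, T y z, T z x] with hvv
  have li : LinearIndependent ℝ vv := by
    rw [Fintype.linearIndependent_iff]
    intro g hg
    have hK : ∀ t : V, g 0 * B x t + g 1 * B y t + g 2 * B z t + g 3 * B (T u w) t
        + g 4 * B (T w s) t + g 5 * B (T s u) t + g 6 * B u t + g 7 * B w t + g 8 * B s t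
        + g 9 * B (T x y) t + g 10 * B (T y z) t + g 11 * B (T z x) t = 0 := by
      intro t
      have h0 : B (∑ i, g i • vv i) t = 0 := by rw [hg]; simp
      have hexp : (∑ i, g i • vv i) = g 0 • x + g 1 • y + g 2 • z + g 3 • T u w
          + g 4 • T w s + g 5 • T s u + g 6 • u + g 7 • w + g 8 • s
          + g 9 • T x y + g 10 • T y z + g 11 • T z x := by
        rw [sum12aux (fun i => g i • vv i)]
        simp only [hvv]
        rfl
      rw [hexp] at h0
      simp only [map_add, map_smul, LinearMap.add_apply, LinearMap.smul_apply,
        smul_eq_mul] at h0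
      linarith
    have E0 : g 0 * B (T x y) z = 0 := by
      have E := hK (T y z)
      rw [show B x (T y z) = B (T x y) z from (hBsymm _ _).trans (hcyc x y z).symm,
        hd1' y z, hd2' y z, hTT u w y z, hTT w s y z, hTT s u y z,
        hmm2 u _ mu mTyz, hmm2 w _ mw mTyz, hmm2 s _ ms mTyz,
        hTT x y y z, hTT y z y z, hTT z x y z] at E
      linarith
    have hg0 : g 0 = 0 := by
      rcases mul_eq_zero.mp E0 with h | h
      · exact h
      · exact absurd h hc
    have E1 : g 1 * B (T x y) z = 0 := by
      have E := hK (T z x)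
      rw [show B y (T z x) = B (T x y) z from (hBsymm _ _).trans (hcyc z x y),
        hd2' z x, hd1' z x, hTT u w z x, hTT w s z x, hTT s u z x,
        hmm2 u _ mu mTzx, hmm2 w _ mw mTzx, hmm2 s _ ms mTzx,
        hTT x y z x, hTT y z z x, hTT z x z x] at E
      linarith
    have hg1 : g 1 = 0 := by
      rcases mul_eq_zero.mp E1 with h | h
      · exact h
      · exact absurd h hc
    have E2 : g 2 * B (T x y) z = 0 := by
      have E := hK (T x y)
      rw [show B z (T x y) = B (T x y) z from hBsymm _ _,
        hd1' x y, hd2' x y, hTT u w x y, hTT w s x y, hTT s u x y,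
        hmm2 u _ mu mTxy, hmm2 w _ mw mTxy, hmm2 s _ ms mTxy,
        hTT x y x y, hTT y z x y, hTT z x x y] at E
      linarith
    have hg2 : g 2 = 0 := by
      rcases mul_eq_zero.mp E2 with h | h
      · exact h
      · exact absurd h hc
    have E3 : g 6 * B (T u w) s = 0 := by
      have E := hK (T w s)
      rw [show B u (T w s) = B (T u w) s from (hBsymm _ _).trans (hcyc u w s).symm,
        hd1' w s, hd2' w s, hTT u w w s, hTT w s w s, hTT s u w s,
        hpp x _ px pTws, hpp y _ py pTws, hpp z _ pz pTws,
        hTT x y w s, hTT y z w s, hTT z x w s] at E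
      linarith
    have hg6 : g 6 = 0 := by
      rcases mul_eq_zero.mp E3 with h | h
      · exact h
      · exact absurd h hd
    have E4 : g 7 * B (T u w) s = 0 := by
      have E := hK (T s u)
      rw [show B w (T s u) = B (T u w) s from (hBsymm _ _).trans (hcyc s u w),
        hd2' s u, hd1' s u, hTT u w s u, hTT w s s u, hTT s u s u,
        hpp x _ px pTsu, hpp y _ py pTsu, hpp z _ pz pTsu,
        hTT x y s u, hTT y z s u, hTT z x s u] at E
      linarith
    have hg7 : g 7 = 0 := by
      rcases mul_eq_zero.mp E4 with h | h
      · exact h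
      · exact absurd h hd
    have E5 : g 8 * B (T u w) s = 0 := by
      have E := hK (T u w)
      rw [show B s (T u w) = B (T u w) s from hBsymm _ _,
        hd1' u w, hd2' u w, hTT u w u w, hTT w s u w, hTT s u u w,
        hpp x _ px pTuw, hpp y _ py pTuw, hpp z _ pz pTuw,
        hTT x y u w, hTT y z u w, hTT z x u w] at E
      linarith
    have hg8 : g 8 = 0 := by
      rcases mul_eq_zero.mp E5 with h | h
      · exact h
      · exact absurd h hd
    have E6 : g 4 * B (T u w) s = 0 := by
      have E := hK u
      rw [hg0, hg1, hg2,
        hd1 u w, show B (T w s) u = B (T u w) s from (hcyc u w s).symm, hd2 s u,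
        hmm2 u u mu mu, hmm2 w u mw mu, hmm2 s u ms mu,
        hmm2 _ u mTxy mu, hmm2 _ u mTyz mu, hmm2 _ u mTzx mu] at E
      linarith
    have hg4 : g 4 = 0 := by
      rcases mul_eq_zero.mp E6 with h | h
      · exact h
      · exact absurd h hd
    have E7 : g 5 * B (T u w) s = 0 := by
      have E := hK w
      rw [hg0, hg1, hg2,
        hd2 u w, hd1 w s, show B (T s u) w = B (T u w) s from hcyc s u w,
        hmm2 u w mu mw, hmm2 w w mw mw, hmm2 s w ms mw,
        hmm2 _ w mTxy mw, hmm2 _ w mTyz mw, hmm2 _ w mTzx mw] at E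
      linarith
    have hg5 : g 5 = 0 := by
      rcases mul_eq_zero.mp E7 with h | h
      · exact h
      · exact absurd h hd
    have E8 : g 3 * B (T u w) s = 0 := by
      have E := hK s
      rw [hg0, hg1, hg2,
        hd2 w s, hd1 s u,
        hmm2 u s mu ms, hmm2 w s mw ms, hmm2 s s ms ms,
        hmm2 _ s mTxy ms, hmm2 _ s mTyz ms, hmm2 _ s mTzx ms] at E
      linarith
    have hg3 : g 3 = 0 := by
      rcases mul_eq_zero.mp E8 with h | h
      · exact h
      · exact absurd h hd
    have E9 : g 10 * B (T x y) z = 0 := by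
      have E := hK x
      rw [hg6, hg7, hg8,
        hpp x x px px, hpp y x py px, hpp z x pz px,
        hpp _ x pTuw px, hpp _ x pTws px, hpp _ x pTsu px,
        hd1 x y, show B (T y z) x = B (T x y) z from (hcyc x y z).symm, hd2 z x] at E
      linarith
    have hg10 : g 10 = 0 := by
      rcases mul_eq_zero.mp E9 with h | h
      · exact h
      · exact absurd h hc
    have E10 : g 11 * B (T x y) z = 0 := by
      have E := hK y
      rw [hg6, hg7, hg8,
        hpp x y px py, hpp y y py py, hpp z y pz py,
        hpp _ y pTuw py, hpp _ y pTws py, hpp _ y pTsu py,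
        hd2 x y, hd1 y z, show B (T z x) y = B (T x y) z from hcyc z x y] at E
      linarith
    have hg11 : g 11 = 0 := by
      rcases mul_eq_zero.mp E10 with h | h
      · exact h
      · exact absurd h hc
    have E11 : g 9 * B (T x y) z = 0 := by
      have E := hK z
      rw [hg6, hg7, hg8,
        hpp x z px pz, hpp y z py pz, hpp z z pz pz,
        hpp _ z pTuw pz, hpp _ z pTws pz, hpp _ z pTsu pz,
        hd2 y z, hd1 z x] at E
      linarith
    have hg9 : g 9 = 0 := by
      rcases mul_eq_zero.mp E11 with h | h
      · exact h
      · exact absurd h hc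
    intro i
    fin_cases i
    exacts [hg0, hg1, hg2, hg3, hg4, hg5, hg6, hg7, hg8, hg9, hg10, hg11]
  have h12 : 12 ≤ Module.finrank ℝ V := by
    simpa using li.fintype_card_le_finrank
  omega
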